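/- Green's function instance of the translational-invariance rank identity: fix n ≥ 1, ω ∈ ℝ, and m₁, n₁, m₂, n₂ ≥ 1. Define the 4-mode Green's function tensor for two parallel unit plates at distance 1 by K i₁ i₂ j₁ j₂ = exp(−iωρ)/ρ where ρ = √( ((i₁−j₁)/n)² + ((i₂−j₂)/n)² + 1 ), and let M ∈ Matrix (Fin m₁ × Fin m₂ × Fin n₂) (Fin n₁) ℂ be its mode-3 unfolding, M (i₁,i₂,j₂) j₁ = K i₁ i₂ j₁ j₂. Then rank M = rank N, where N ∈ Matrix (Fin m₁ × Fin (m₂+n₂−1)) (Fin n₁) ℂ is the Green's function interaction matrix between the enlarged target grid and a source segment: N (i₁,c) j₁ = exp(−iωρ')/ρ' with ρ' = √( ((i₁−j₁)/n)² + ((c−(n₂−1))/n)² + 1 ). -/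
import Mathlib

open Matrix

lemma rank_submatrix_left_surjective {m m' n : Type*} [Fintype m] [Fintype m']
    [Fintype n] [DecidableEq n] (A : Matrix m n ℂ) (f : m' → m)
    (hf : Function.Surjective f) : (A.submatrix f id).rank = A.rank := by
  have hcomp : (A.submatrix f id).mulVecLin =
      (LinearMap.funLeft ℂ ℂ f).comp A.mulVecLin := by
    ext v i
    simp [Matrix.mulVecLin, Matrix.mulVec, dotProduct, Matrix.submatrix,
      Pi.single_apply, mul_ite, Finset.sum_ite_eq']
  have hinj := LinearMap.funLeft_injective_of_surjective ℂ ℂ f hf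
  rw [Matrix.rank, Matrix.rank, hcomp, LinearMap.range_comp]
  exact (LinearEquiv.finrank_eq
    (Submodule.equivMapOfInjective _ hinj (LinearMap.range A.mulVecLin))).symm

/-- Green's function instance of the translational-invariance rank identity:
the mode-3 unfolding of the free-space Helmholtz Green's function tensor for two
parallel facing unit plates at distance 1 has the same rank as the Green's
interaction matrix between an enlarged target grid and a source segment. -/
theorem green_unfolding_rank_eq (n : ℕ) (hn : 1 ≤ n) (ω : ℝ)
    (m₁ n₁ m₂ n₂ : ℕ) (hm₁ : 1 ≤ m₁) (hn₁ : 1 ≤ n₁) (hm₂ : 1 ≤ m₂) (hn₂ : 1 ≤ n₂) :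
    (Matrix.of fun (p : Fin m₁ × Fin m₂ × Fin n₂) (j₁ : Fin n₁) =>
        Complex.exp (-(Complex.I) * (ω : ℂ) *
          ((Real.sqrt ((((p.1 : ℝ) - (j₁ : ℝ)) / (n : ℝ)) ^ 2 +
              (((p.2.1 : ℝ) - (p.2.2 : ℝ)) / (n : ℝ)) ^ 2 + 1) : ℝ) : ℂ)) /
        ((Real.sqrt ((((p.1 : ℝ) - (j₁ : ℝ)) / (n : ℝ)) ^ 2 +
            (((p.2.1 : ℝ) - (p.2.2 : ℝ)) / (n : ℝ)) ^ 2 + 1) : ℝ) : ℂ)).rank =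
    (Matrix.of fun (q : Fin m₁ × Fin (m₂ + n₂ - 1)) (j₁ : Fin n₁) =>
        Complex.exp (-(Complex.I) * (ω : ℂ) *
          ((Real.sqrt ((((q.1 : ℝ) - (j₁ : ℝ)) / (n : ℝ)) ^ 2 +
              (((q.2 : ℝ) - ((n₂ : ℝ) - 1)) / (n : ℝ)) ^ 2 + 1) : ℝ) : ℂ)) /
        ((Real.sqrt ((((q.1 : ℝ) - (j₁ : ℝ)) / (n : ℝ)) ^ 2 +
            (((q.2 : ℝ) - ((n₂ : ℝ) - 1)) / (n : ℝ)) ^ 2 + 1) : ℝ) : ℂ)).rank := by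
  set N : Matrix (Fin m₁ × Fin (m₂ + n₂ - 1)) (Fin n₁) ℂ :=
    Matrix.of fun (q : Fin m₁ × Fin (m₂ + n₂ - 1)) (j₁ : Fin n₁) =>
        Complex.exp (-(Complex.I) * (ω : ℂ) *
          ((Real.sqrt ((((q.1 : ℝ) - (j₁ : ℝ)) / (n : ℝ)) ^ 2 +
              (((q.2 : ℝ) - ((n₂ : ℝ) - 1)) / (n : ℝ)) ^ 2 + 1) : ℝ) : ℂ)) /
        ((Real.sqrt ((((q.1 : ℝ) - (j₁ : ℝ)) / (n : ℝ)) ^ 2 +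
            (((q.2 : ℝ) - ((n₂ : ℝ) - 1)) / (n : ℝ)) ^ 2 + 1) : ℝ) : ℂ) with hN
  let e : Fin m₁ × Fin m₂ × Fin n₂ → Fin m₁ × Fin (m₂ + n₂ - 1) :=
    fun p => (p.1, ⟨p.2.1 + (n₂ - 1) - p.2.2, by
      have := p.2.1.isLt; have := p.2.2.isLt; omega⟩)
  have hsurj : Function.Surjective e := by
    rintro ⟨i₁, c⟩
    have hc := c.isLt
    by_cases h : (n₂ - 1 : ℕ) ≤ c
    · refine ⟨⟨i₁, ⟨c - (n₂ - 1), by omega⟩, ⟨0, by omega⟩⟩, ?_⟩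
      refine Prod.ext rfl (Fin.ext ?_)
      simp [e]; omega
    · refine ⟨⟨i₁, ⟨0, by omega⟩, ⟨(n₂ - 1) - c, by omega⟩⟩, ?_⟩
      refine Prod.ext rfl (Fin.ext ?_)
      simp [e]; omega
  have hM : (Matrix.of fun (p : Fin m₁ × Fin m₂ × Fin n₂) (j₁ : Fin n₁) =>
        Complex.exp (-(Complex.I) * (ω : ℂ) *
          ((Real.sqrt ((((p.1 : ℝ) - (j₁ : ℝ)) / (n : ℝ)) ^ 2 +
              (((p.2.1 : ℝ) - (p.2.2 : ℝ)) / (n : ℝ)) ^ 2 + 1) : ℝ) : ℂ)) /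
        ((Real.sqrt ((((p.1 : ℝ) - (j₁ : ℝ)) / (n : ℝ)) ^ 2 +
            (((p.2.1 : ℝ) - (p.2.2 : ℝ)) / (n : ℝ)) ^ 2 + 1) : ℝ) : ℂ)) =
      N.submatrix e id := by
    ext p j₁
    obtain ⟨i₁, i₂, j₂⟩ := p
    have hkey : (((i₂ : ℕ) + (n₂ - 1) - (j₂ : ℕ) : ℕ) : ℝ) - ((n₂ : ℝ) - 1) =
        (i₂ : ℝ) - (j₂ : ℝ) := by
      have h1 : ((j₂ : ℕ)) ≤ (i₂ : ℕ) + (n₂ - 1) := by have := j₂.isLt; omega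
      rw [Nat.cast_sub h1, Nat.cast_add, Nat.cast_sub hn₂]
      push_cast; ring
    simp only [Matrix.submatrix_apply, id, hN, Matrix.of_apply, e]
    rw [hkey]
  rw [hM, rank_submatrix_left_surjective N e hsurj]
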